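/- With R̃ as the curvature tensor of the nearly Kähler S³×S³, if Ω is a 2-plane spanned by a g-orthonormal pair {X, JX} with P(Ω) = Ω, then the sectional curvature g(R̃(X,JX)JX, X) equals 0. -/

import Mathlib

open RealInnerProductSpace

/-- for the curvature tensor `R̃` of the nearly Kähler `S³×S³`,
a `J`-invariant 2-plane `Ω = span{X, JX}` with `P(Ω) = Ω` has sectional
curvature `0`. -/
theorem stmt_8 {E : Type*} [NormedAddCommGroup E] [InnerProductSpace ℝ E]
    (J P : E →ₗ[ℝ] E)
    (hJ2 : ∀ x, J (J x) = -x) (hP2 : ∀ x, P (P x) = x)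
    (hPJ : ∀ x, P (J x) = -J (P x))
    (hJg : ∀ x y, ⟪J x, J y⟫ = ⟪x, y⟫)
    (hPg : ∀ x y, ⟪P x, P y⟫ = ⟪x, y⟫)
    (R : E → E → E → E)
    (hR : ∀ U V W, R U V W =
      (5 / 12 : ℝ) • (⟪V, W⟫ • U - ⟪U, W⟫ • V)
      + (1 / 12 : ℝ) •
          (⟪J V, W⟫ • J U - ⟪J U, W⟫ • J V - (2 : ℝ) • (⟪J U, V⟫ • J W))
      + (1 / 3 : ℝ) •
          (⟪P V, W⟫ • P U - ⟪P U, W⟫ • P V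
            + ⟪P (J V), W⟫ • P (J U) - ⟪P (J U), W⟫ • P (J V)))
    (X : E) (hX : ⟪X, X⟫ = 1) (hXJX : ⟪X, J X⟫ = 0)
    (h1 : ∃ a b : ℝ, P X = a • X + b • J X)
    (h2 : ∃ a b : ℝ, P (J X) = a • X + b • J X) :
    ⟪R X (J X) (J X), X⟫ = 0 := by
  obtain ⟨a, b, hab⟩ := h1
  have hJXX : ⟪J X, X⟫ = 0 := by rw [real_inner_comm]; exact hXJX
  have hJXJX : ⟪J X, J X⟫ = (1:ℝ) := by rw [hJg]; exact hX
  have hPJX : P (J X) = b • X - a • J X := by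
    rw [hPJ, hab]
    simp [hJ2 X]
    module
  have hsq : a ^ 2 + b ^ 2 = 1 := by
    have := hPg X X
    rw [hab, hX] at this
    simp only [inner_add_left, inner_add_right, real_inner_smul_left,
      real_inner_smul_right, hX, hXJX, hJXX, hJXJX] at this
    nlinarith [this]
  have hPnX : P (-X) = -(a • X) - b • J X := by
    rw [map_neg, hab]; module
  rw [hR, hJ2 X, hab, hPJX, hPnX]
  simp only [two_nsmul, inner_add_left, inner_add_right, inner_sub_left,
    inner_sub_right, real_inner_smul_left, real_inner_smul_right,
    inner_neg_left, inner_neg_right, map_neg, map_smul, map_add, map_sub,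
    hX, hXJX, hJXX, hJXJX]
  ring_nf
  nlinarith [hsq]
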